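/- The power series φ(s) = 1 + εs + 2·Σ_{n≥0} ((−1)ⁿσ^{n+1} s^{2n+2})/((2n+2)(2n+1)·n!) satisfies the ODE φ''(s) = 2σ(φ(s) − sφ'(s)) for all real s, for any real constants σ and ε. -/

import Mathlib

noncomputable section DouglasAux

namespace DouglasAux

def bco (σ : ℝ) : ℕ → ℝ
  | 0 => 0
  | (n+1) => (-1 : ℝ) ^ n * σ ^ (n + 1) / ((2 * (n : ℝ) + 1) * (n + 1).factorial)

def dco (σ : ℝ) (n : ℕ) : ℝ :=
  (-1 : ℝ) ^ n * σ ^ (n + 1) / ((2 * (n : ℝ) + 1) * n.factorial)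

def eco (σ : ℝ) (n : ℕ) : ℝ :=
  -((-1 : ℝ) ^ n) * σ ^ (n + 2) / ((2 * (n : ℝ) + 3) * n.factorial)

lemma summable_aux {A B : ℝ} {c : ℕ → ℝ} (hc : ∀ n, |c n| ≤ A * B ^ n / n.factorial)
    (u : ℝ) : Summable fun n => c n * u ^ n := by
  refine Summable.of_norm_bounded
    ((Real.summable_pow_div_factorial (B * |u|)).mul_left A) fun n => ?_
  have h1 : ‖c n * u ^ n‖ = |c n| * |u| ^ n := by
    rw [Real.norm_eq_abs, abs_mul, abs_pow]
  rw [h1]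
  calc |c n| * |u| ^ n ≤ (A * B ^ n / n.factorial) * |u| ^ n :=
        mul_le_mul_of_nonneg_right (hc n) (pow_nonneg (abs_nonneg u) n)
    _ = A * ((B * |u|) ^ n / n.factorial) := by rw [mul_pow]; ring

lemma summable_aux' {A B : ℝ} (hA : 0 ≤ A) (hB : 0 ≤ B) {c : ℕ → ℝ}
    (hc : ∀ n, |c n| ≤ A * B ^ n / n.factorial) {r : ℝ} (hr : 0 ≤ r) :
    Summable fun n => |c n| * ((n : ℝ) + 1) * r ^ n := by
  refine Summable.of_nonneg_of_le (fun n => by positivity) (fun n => ?_)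
    ((Real.summable_pow_div_factorial (2 * B * r)).mul_left A)
  have h2 : ((n : ℝ) + 1) ≤ 2 ^ n := by exact_mod_cast n.lt_two_pow_self
  have h3 : (0:ℝ) ≤ A * B ^ n / n.factorial := le_trans (abs_nonneg _) (hc n)
  calc |c n| * ((n : ℝ) + 1) * r ^ n
      ≤ (A * B ^ n / n.factorial) * (2 ^ n) * r ^ n := by
        apply mul_le_mul_of_nonneg_right _ (pow_nonneg hr n)
        exact mul_le_mul (hc n) h2 (by positivity) h3
    _ = A * ((2 * B * r) ^ n / n.factorial) := by rw [mul_pow, mul_pow]; ring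

/-- Term-by-term differentiation of an entire power series. -/
lemma hasDerivAt_aux {A B : ℝ} (hA : 0 ≤ A) (hB : 0 ≤ B) {c c' : ℕ → ℝ}
    (hc : ∀ n, |c n| ≤ A * B ^ n / n.factorial)
    (hcd : ∀ n, c' n = ((n : ℝ) + 1) * c (n + 1)) (x : ℝ) :
    HasDerivAt (fun y => ∑' n, c n * y ^ n) (∑' n, c' n * x ^ n) x := by
  set R : ℝ := |x| + 1 with hR
  have hR1 : (1:ℝ) ≤ R := by rw [hR]; linarith [abs_nonneg x]
  have hRpos : (0:ℝ) < R := lt_of_lt_of_le one_pos hR1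
  have hu : Summable fun n => |c n| * ((n : ℝ) + 1) * R ^ n :=
    summable_aux' hA hB hc hRpos.le
  have hxmem : x ∈ Metric.ball (0:ℝ) R := by
    simp [Real.dist_eq, hR]
  have h0mem : (0:ℝ) ∈ Metric.ball (0:ℝ) R := by simp [hRpos]
  have hbound : ∀ (n : ℕ) (y : ℝ), y ∈ Metric.ball (0:ℝ) R →
      ‖c n * ((n : ℝ) * y ^ (n - 1))‖ ≤ |c n| * ((n : ℝ) + 1) * R ^ n := by
    intro n y hy
    have hyR : |y| ≤ R := by
      have := mem_ball_zero_iff.mp hy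
      simpa [Real.norm_eq_abs] using this.le
    have h1 : ‖c n * ((n : ℝ) * y ^ (n - 1))‖ = |c n| * ((n : ℝ) * |y| ^ (n - 1)) := by
      rw [Real.norm_eq_abs, abs_mul, abs_mul, abs_pow, Nat.abs_cast]
    rw [h1, mul_assoc]
    apply mul_le_mul_of_nonneg_left _ (abs_nonneg _)
    calc (n : ℝ) * |y| ^ (n - 1) ≤ ((n : ℝ) + 1) * R ^ (n - 1) := by
          apply mul_le_mul (by linarith) (pow_le_pow_left₀ (abs_nonneg y) hyR _)
            (by positivity) (by positivity)
      _ ≤ ((n : ℝ) + 1) * R ^ n := by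
          apply mul_le_mul_of_nonneg_left (pow_le_pow_right₀ hR1 (n.sub_le 1)) (by positivity)
  have h := hasDerivAt_tsum_of_isPreconnected hu Metric.isOpen_ball
    (convex_ball (0:ℝ) R).isPreconnected
    (fun n y _ => (hasDerivAt_pow n y).const_mul (c n))
    hbound h0mem (summable_aux hc 0) hxmem
  have hsum' : Summable fun n => c n * ((n : ℝ) * x ^ (n - 1)) :=
    Summable.of_norm_bounded hu fun n => hbound n x hxmem
  have heq : ∑' n, c n * ((n : ℝ) * x ^ (n - 1)) = ∑' n, c' n * x ^ n := by
    rw [hsum'.tsum_eq_zero_add]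
    simp only [Nat.cast_zero, zero_mul, mul_zero, zero_add]
    refine tsum_congr fun n => ?_
    rw [hcd n]
    push_cast
    ring_nf
  rw [heq] at h
  exact h

lemma bco_bound (σ : ℝ) (n : ℕ) : |bco σ n| ≤ 1 * |σ| ^ n / n.factorial := by
  cases n with
  | zero => simp [bco]
  | succ n =>
    have hF : (0:ℝ) < ((n+1).factorial : ℝ) := by exact_mod_cast (n+1).factorial_pos
    have h1 : |bco σ (n+1)| = |σ| ^ (n+1) / ((2*(n:ℝ)+1) * (n+1).factorial) := by
      rw [bco, abs_div, abs_mul, abs_pow, abs_pow, abs_neg, abs_one, one_pow, one_mul]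
      congr 1
      rw [abs_of_pos (by positivity)]
    rw [h1, one_mul]
    gcongr
    nlinarith [hF, (Nat.cast_nonneg n : (0:ℝ) ≤ n)]

lemma dco_bound (σ : ℝ) (n : ℕ) : |dco σ n| ≤ |σ| * |σ| ^ n / n.factorial := by
  have hF : (0:ℝ) < (n.factorial : ℝ) := by exact_mod_cast n.factorial_pos
  have h1 : |dco σ n| = |σ| ^ (n+1) / ((2*(n:ℝ)+1) * n.factorial) := by
    rw [dco, abs_div, abs_mul, abs_pow, abs_pow, abs_neg, abs_one, one_pow, one_mul]
    congr 1
    rw [abs_of_pos (by positivity)]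
  rw [h1, ← pow_succ']
  gcongr
  nlinarith [hF, (Nat.cast_nonneg n : (0:ℝ) ≤ n)]

lemma eco_bound (σ : ℝ) (n : ℕ) : |eco σ n| ≤ |σ|^2 * |σ| ^ n / n.factorial := by
  have hF : (0:ℝ) < (n.factorial : ℝ) := by exact_mod_cast n.factorial_pos
  have h1 : |eco σ n| = |σ| ^ (n+2) / ((2*(n:ℝ)+3) * n.factorial) := by
    rw [eco, abs_div, abs_mul, abs_neg, abs_pow, abs_pow, abs_neg, abs_one, one_pow, one_mul]
    congr 1
    rw [abs_of_pos (by positivity)]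
  rw [h1]
  have h2 : |σ|^2 * |σ|^n = |σ|^(n+2) := by ring
  rw [h2]
  gcongr
  nlinarith [hF, (Nat.cast_nonneg n : (0:ℝ) ≤ n)]

lemma dco_eq (σ : ℝ) (n : ℕ) : dco σ n = ((n : ℝ) + 1) * bco σ (n + 1) := by
  have hF : (0:ℝ) < (n.factorial : ℝ) := by exact_mod_cast n.factorial_pos
  have h1 : (2*(n:ℝ)+1) ≠ 0 := by positivity
  rw [dco, bco, Nat.factorial_succ]
  push_cast
  field_simp

lemma eco_eq (σ : ℝ) (n : ℕ) : eco σ n = ((n : ℝ) + 1) * dco σ (n + 1) := by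
  have hF : (0:ℝ) < (n.factorial : ℝ) := by exact_mod_cast n.factorial_pos
  rw [eco, dco, Nat.factorial_succ]
  push_cast
  have h1 : (2*((n:ℝ)+1)+1) = 2*(n:ℝ)+3 := by ring
  rw [h1]
  have h2 : (2*(n:ℝ)+3) ≠ 0 := by positivity
  field_simp
  ring

lemma coef_zero (σ : ℝ) (n : ℕ) :
    4 * eco σ n + 2 * dco σ (n+1) - 2 * σ * bco σ (n+1) + 4 * σ * dco σ n = 0 := by
  have hF : (0:ℝ) < (n.factorial : ℝ) := by exact_mod_cast n.factorial_pos
  have h1 : (2*(n:ℝ)+1) ≠ 0 := by positivity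
  have h3 : (2*(n:ℝ)+3) ≠ 0 := by positivity
  rw [eco, dco, dco, bco, Nat.factorial_succ]
  push_cast
  have h4 : (2*((n:ℝ)+1)+1) = 2*(n:ℝ)+3 := by ring
  rw [h4]
  field_simp
  ring


end DouglasAux
end DouglasAux

set_option maxHeartbeats 1000000 in
open DouglasAux in
/-- The power series φ(s) = 1 + εs + 2·Σ_{n≥0} ((−1)ⁿσ^{n+1}s^{2n+2})/((2n+2)(2n+1)n!)
satisfies φ''(s) = 2σ(φ(s) − sφ'(s)) for all real s. -/
theorem series_solution_douglas_ode_delta_zero (σ ε : ℝ) :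
    let φ : ℝ → ℝ := fun s => 1 + ε * s +
      2 * ∑' n : ℕ, ((-1 : ℝ) ^ n * σ ^ (n + 1) * s ^ (2 * n + 2)) /
        ((2 * (n : ℝ) + 2) * (2 * (n : ℝ) + 1) * (n.factorial : ℝ))
    ∀ s : ℝ, deriv (deriv φ) s = 2 * σ * (φ s - s * deriv φ s) := by
  intro φ s
  have hσ2 : (0:ℝ) ≤ |σ|^2 := by positivity
  -- derivative of ψ is ψ₁, derivative of ψ₁ is ψ₂
  have hψd : ∀ u : ℝ, HasDerivAt (fun y => ∑' n, bco σ n * y ^ n)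
      (∑' n, dco σ n * u ^ n) u :=
    fun u => hasDerivAt_aux zero_le_one (abs_nonneg σ) (bco_bound σ) (dco_eq σ) u
  have hψ1d : ∀ u : ℝ, HasDerivAt (fun y => ∑' n, dco σ n * y ^ n)
      (∑' n, eco σ n * u ^ n) u :=
    fun u => hasDerivAt_aux (abs_nonneg σ) (abs_nonneg σ) (dco_bound σ) (eco_eq σ) u
  -- φ in terms of ψ(s²)
  have hφ : φ = fun t => 1 + ε * t + (∑' n, bco σ n * (t^2) ^ n) := by
    funext t
    show 1 + ε * t + 2 * ∑' n : ℕ, ((-1 : ℝ) ^ n * σ ^ (n + 1) * t ^ (2 * n + 2)) /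
        ((2 * (n : ℝ) + 2) * (2 * (n : ℝ) + 1) * (n.factorial : ℝ)) = _
    congr 1
    rw [(summable_aux (bco_bound σ) (t^2)).tsum_eq_zero_add]
    have hb0 : bco σ 0 * (t^2) ^ 0 = 0 := by simp [bco]
    rw [hb0, zero_add, ← tsum_mul_left]
    refine tsum_congr fun n => ?_
    have hF : (0:ℝ) < (n.factorial : ℝ) := by exact_mod_cast n.factorial_pos
    have h1 : (2*(n:ℝ)+1) ≠ 0 := by positivity
    have h2 : (2*(n:ℝ)+2) ≠ 0 := by positivity
    rw [bco, ← pow_mul, Nat.factorial_succ]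
    push_cast
    rw [show 2 * (n + 1) = 2 * n + 2 from by ring]
    field_simp
  -- first derivative
  have hφ' : ∀ t : ℝ, HasDerivAt φ (ε + (∑' n, dco σ n * (t^2) ^ n) * (2 * t)) t := by
    intro t
    rw [hφ]
    have hcomp : HasDerivAt (fun y : ℝ => ∑' n, bco σ n * (y^2) ^ n)
        ((∑' n, dco σ n * (t^2) ^ n) * (2 * t)) t := by
      have := (hψd (t^2)).comp t (hasDerivAt_pow 2 t)
      simpa [Function.comp_def] using this
    have := ((hasDerivAt_const t (1:ℝ)).add ((hasDerivAt_id t).const_mul ε)).add hcomp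
    simpa [Pi.add_def] using this
  have hd1 : deriv φ = fun t => ε + (∑' n, dco σ n * (t^2) ^ n) * (2 * t) :=
    funext fun t => (hφ' t).deriv
  -- second derivative at s
  have h2d : HasDerivAt (fun t => ε + (∑' n, dco σ n * (t^2) ^ n) * (2 * t))
      ((∑' n, eco σ n * (s^2) ^ n) * (2 * s) * (2 * s)
        + (∑' n, dco σ n * (s^2) ^ n) * 2) s := by
    have hc : HasDerivAt (fun t : ℝ => ∑' n, dco σ n * (t^2) ^ n)
        ((∑' n, eco σ n * (s^2) ^ n) * (2 * s)) s := by
      have := (hψ1d (s^2)).comp s (hasDerivAt_pow 2 s)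
      simpa [Function.comp_def] using this
    have hm : HasDerivAt (fun t : ℝ => (∑' n, dco σ n * (t^2) ^ n) * (2 * t))
        ((∑' n, eco σ n * (s^2) ^ n) * (2 * s) * (2 * s)
          + (∑' n, dco σ n * (s^2) ^ n) * 2) s := by
      have := hc.mul ((hasDerivAt_id s).const_mul 2)
      simpa [Pi.mul_def, mul_comm, mul_assoc, mul_left_comm] using this
    simpa using hm.const_add ε
  -- key series identity
  have key : ∀ u : ℝ, 4 * u * (∑' n, eco σ n * u ^ n) + 2 * (∑' n, dco σ n * u ^ n)
      = 2 * σ * (1 + (∑' n, bco σ n * u ^ n) - 2 * u * (∑' n, dco σ n * u ^ n)) := by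
    intro u
    have hsb := summable_aux (bco_bound σ) u
    have hsd := summable_aux (dco_bound σ) u
    have hse := summable_aux (eco_bound σ) u
    have hse' : Summable fun n => eco σ n * u ^ (n+1) :=
      (hse.mul_right u).congr fun n => by rw [pow_succ]; ring
    have hsd' : Summable fun n => dco σ n * u ^ (n+1) :=
      (hsd.mul_right u).congr fun n => by rw [pow_succ]; ring
    have hsdp : Summable fun n => dco σ (n+1) * u ^ (n+1) :=
      (summable_nat_add_iff 1).mpr hsd
    have hsbp : Summable fun n => bco σ (n+1) * u ^ (n+1) :=
      (summable_nat_add_iff 1).mpr hsb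
    have sa : Summable fun n => 4 * (eco σ n * u ^ (n+1)) := hse'.mul_left 4
    have sb : Summable fun n => 2 * (dco σ (n+1) * u ^ (n+1)) := hsdp.mul_left 2
    have sc : Summable fun n => 2 * σ * (bco σ (n+1) * u ^ (n+1)) := hsbp.mul_left (2*σ)
    have sd : Summable fun n => 4 * σ * (dco σ n * u ^ (n+1)) := hsd'.mul_left (4*σ)
    have e1 : u * (∑' n, eco σ n * u ^ n) = ∑' n, eco σ n * u ^ (n+1) := by
      rw [← tsum_mul_left]; exact tsum_congr fun n => by ring
    have e2 : u * (∑' n, dco σ n * u ^ n) = ∑' n, dco σ n * u ^ (n+1) := by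
      rw [← tsum_mul_left]; exact tsum_congr fun n => by ring
    have e3 : (∑' n, dco σ n * u ^ n) = σ + ∑' n, dco σ (n+1) * u ^ (n+1) := by
      rw [hsd.tsum_eq_zero_add]
      congr 1
      norm_num [dco]
    have e4 : (∑' n, bco σ n * u ^ n) = ∑' n, bco σ (n+1) * u ^ (n+1) := by
      rw [hsb.tsum_eq_zero_add]
      simp [bco]
    have e5 : ∑' n, (4 * (eco σ n * u ^ (n+1)) + 2 * (dco σ (n+1) * u ^ (n+1))
        - 2 * σ * (bco σ (n+1) * u ^ (n+1)) + 4 * σ * (dco σ n * u ^ (n+1))) = 0 := by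
      calc ∑' n, (4 * (eco σ n * u ^ (n+1)) + 2 * (dco σ (n+1) * u ^ (n+1))
            - 2 * σ * (bco σ (n+1) * u ^ (n+1)) + 4 * σ * (dco σ n * u ^ (n+1)))
          = ∑' _ : ℕ, (0:ℝ) :=
            tsum_congr fun n => by linear_combination u ^ (n+1) * coef_zero σ n
        _ = 0 := tsum_zero
    rw [((sa.add sb).sub sc).tsum_add sd, (sa.add sb).tsum_sub sc, sa.tsum_add sb,
      tsum_mul_left, tsum_mul_left, tsum_mul_left, tsum_mul_left] at e5
    linear_combination 4 * e1 + 2 * e3 - 2 * σ * e4 + 4 * σ * e2 + e5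
  -- conclude
  rw [hd1, h2d.deriv, hφ]
  linear_combination key (s^2)
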